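/- Let 0 ≤ α < n and let μ be a positive locally finite Borel measure on ℝⁿ. (i) If J, K, I are cubes with J ⊆ K, 2K ⊆ I, and μ(I) = 0, then c · P^α(J,μ)/ℓ(J) ≤ P^α(K,μ)/ℓ(K) ≤ C · P^α(J,μ)/ℓ(J), where 0 < c ≤ C depend only on n and α. (ii) If J, K, I are cubes with 2J ⊆ K ⊆ I and μ(I) = 0, then P^α(K,μ)/ℓ(K) ≤ C · P^α(J,μ)/ℓ(J), with C depending only on n and α. -/

import Mathlib

open MeasureTheory
open scoped ENNReal NNReal

noncomputable section

/-- An axis-parallel half-open cube in `ℝⁿ`, given by its corner `a` and side length `l`. -/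
structure QCube (n : ℕ) where
  a : Fin n → ℝ
  l : ℝ

/-- The half-open cube as a subset of `ℝⁿ`. -/
def QCube.pts {n : ℕ} (Q : QCube n) : Set (EuclideanSpace ℝ (Fin n)) :=
  {x | ∀ i, Q.a i ≤ x i ∧ x i < Q.a i + Q.l}

/-- The center of a cube. -/
def QCube.center {n : ℕ} (Q : QCube n) : EuclideanSpace ℝ (Fin n) :=
  (EuclideanSpace.equiv (Fin n) ℝ).symm fun i => Q.a i + Q.l / 2

/-- The concentric dilate `γQ` of a cube `Q`. -/
def QCube.dilate {n : ℕ} (Q : QCube n) (γ : ℝ) : QCube n :=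
  ⟨fun i => Q.a i + Q.l / 2 - γ * Q.l / 2, γ * Q.l⟩

/-- The `m`-weighted `α`-fractional Poisson integral
`P^α_m(Q,μ) = ∫ ℓ(Q)^m / (ℓ(Q)+|y−c_Q|)^{n+m−α} dμ(y)`; `P^α = P^α_1`. -/
def poissonM {n : ℕ} (α m : ℝ) (Q : QCube n)
    (μ : Measure (EuclideanSpace ℝ (Fin n))) : ℝ≥0∞ :=
  ∫⁻ y, ENNReal.ofReal (Q.l ^ m / (Q.l + dist y Q.center) ^ ((n : ℝ) + m - α)) ∂μ

lemma center_mem {n : ℕ} {Q : QCube n} (h : 0 < Q.l) : Q.center ∈ Q.pts := by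
  intro i
  show Q.a i ≤ Q.a i + Q.l / 2 ∧ Q.a i + Q.l / 2 < Q.a i + Q.l
  constructor <;> nlinarith

lemma coord_le_dist {n : ℕ} (x z : EuclideanSpace ℝ (Fin n)) (i : Fin n) :
    |x i - z i| ≤ dist x z := by
  rw [EuclideanSpace.dist_eq]
  have h0 : |x i - z i| = Real.sqrt (|x i - z i| ^ 2) := by
    rw [Real.sqrt_sq_eq_abs, abs_abs]
  rw [h0]
  apply Real.sqrt_le_sqrt
  have := Finset.single_le_sum (f := fun j => dist (x j) (z j) ^ 2)
    (fun j _ => sq_nonneg _) (Finset.mem_univ i)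
  simpa [Real.dist_eq] using this

lemma dist_le_sqrt {n : ℕ} {x z : EuclideanSpace ℝ (Fin n)} {r : ℝ} (hr : 0 ≤ r)
    (h : ∀ i, |x i - z i| ≤ r) : dist x z ≤ Real.sqrt n * r := by
  rw [EuclideanSpace.dist_eq]
  have h1 : ∑ i, dist (x i) (z i) ^ 2 ≤ (n : ℝ) * r ^ 2 := by
    calc ∑ i, dist (x i) (z i) ^ 2 ≤ ∑ _i : Fin n, r ^ 2 := by
          apply Finset.sum_le_sum
          intro i _
          have := h i
          rw [Real.dist_eq]
          nlinarith [abs_nonneg (x i - z i)]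
      _ = (n : ℝ) * r ^ 2 := by simp
  calc Real.sqrt (∑ i, dist (x i) (z i) ^ 2) ≤ Real.sqrt ((n : ℝ) * r ^ 2) :=
        Real.sqrt_le_sqrt h1
    _ = Real.sqrt n * r := by
        rw [Real.sqrt_mul (Nat.cast_nonneg n), Real.sqrt_sq hr]

lemma coord_bounds {n : ℕ} {Q R : QCube n} (hQ : 0 < Q.l) (h : Q.pts ⊆ R.pts)
    (i : Fin n) : R.a i ≤ Q.a i ∧ Q.a i + Q.l ≤ R.a i + R.l := by
  have key : ∀ t : ℝ, Q.a i ≤ t → t < Q.a i + Q.l → R.a i ≤ t ∧ t < R.a i + R.l := by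
    intro t ht1 ht2
    set x : EuclideanSpace ℝ (Fin n) :=
      (EuclideanSpace.equiv (Fin n) ℝ).symm (fun j => if j = i then t else Q.a j) with hx
    have hxj : ∀ j, x j = if j = i then t else Q.a j := fun j => rfl
    have hxQ : x ∈ Q.pts := by
      intro j
      rw [hxj]
      by_cases hj : j = i
      · subst hj; simp only [if_pos rfl]; exact ⟨ht1, ht2⟩
      · simp only [if_neg hj]; exact ⟨le_refl _, by linarith⟩
    have := h hxQ i
    rwa [hxj, if_pos rfl] at this
  constructor
  · exact (key (Q.a i) le_rfl (by linarith)).1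
  · by_contra h'
    push_neg at h'
    have ht := key (max (Q.a i) (R.a i + R.l)) (le_max_left _ _)
      (max_lt (by linarith) h')
    exact absurd ht.2 (not_lt.mpr (le_max_right _ _))

lemma l_le {n : ℕ} (hn : 1 ≤ n) {Q R : QCube n} (hQ : 0 < Q.l) (h : Q.pts ⊆ R.pts) :
    Q.l ≤ R.l := by
  have i : Fin n := ⟨0, hn⟩
  have := coord_bounds hQ h i
  linarith [this.1, this.2]

lemma sub_dilate2 {n : ℕ} {Q : QCube n} (h : 0 < Q.l) : Q.pts ⊆ (Q.dilate 2).pts := by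
  intro x hx i
  have := hx i
  show Q.a i + Q.l / 2 - 2 * Q.l / 2 ≤ x i ∧ x i < Q.a i + Q.l / 2 - 2 * Q.l / 2 + 2 * Q.l
  constructor <;> linarith [this.1, this.2]

lemma center_dist {n : ℕ} {J K : QCube n} (hK : 0 < K.l) (hc : J.center ∈ K.pts) :
    dist J.center K.center ≤ Real.sqrt n * K.l := by
  apply dist_le_sqrt hK.le
  intro i
  have h1 := hc i
  have h2 : K.center i = K.a i + K.l / 2 := rfl
  rw [abs_le, h2]
  constructor <;> linarith [h1.1, h1.2]

lemma geoUpper {n : ℕ} {J K : QCube n} (hK : 0 < K.l) (hl : J.l ≤ K.l)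
    (hc : J.center ∈ K.pts) (y : EuclideanSpace ℝ (Fin n)) :
    J.l + dist y J.center ≤ (1 + Real.sqrt n) * (K.l + dist y K.center) := by
  have h1 : dist y J.center ≤ dist y K.center + dist K.center J.center :=
    dist_triangle _ _ _
  have h2 : dist K.center J.center ≤ Real.sqrt n * K.l := by
    rw [dist_comm]; exact center_dist hK hc
  nlinarith [Real.sqrt_nonneg (n:ℝ), dist_nonneg (x := y) (y := K.center)]

lemma geoLower {n : ℕ} {J K : QCube n} (hJ : 0 < J.l) (hK : 0 < K.l)
    (hc : J.center ∈ K.pts) {y : EuclideanSpace ℝ (Fin n)}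
    (hy : y ∉ (K.dilate 2).pts) :
    K.l + dist y K.center ≤ (3 + 2 * Real.sqrt n) * (J.l + dist y J.center) := by
  have hdd : dist y K.center ≤ dist y J.center + Real.sqrt n * K.l := by
    have := dist_triangle y J.center K.center
    linarith [center_dist hK hc]
  have hlow : K.l / 2 ≤ dist y J.center := by
    rw [QCube.pts, Set.mem_setOf_eq] at hy
    push_neg at hy
    obtain ⟨i, hi⟩ := hy
    have hci := hc i
    have hcoord := coord_le_dist y J.center i
    have hdil_a : (K.dilate 2).a i = K.a i + K.l / 2 - 2 * K.l / 2 := rfl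
    have hdil_l : (K.dilate 2).l = 2 * K.l := rfl
    rw [hdil_a, hdil_l] at hi
    by_cases h1 : K.a i + K.l / 2 - 2 * K.l / 2 ≤ y i
    · have h2 := hi h1
      have : K.l / 2 ≤ |y i - J.center i| := by
        rw [le_abs]
        left; linarith [hci.2]
      linarith
    · push_neg at h1
      have : K.l / 2 ≤ |y i - J.center i| := by
        rw [le_abs]
        right; linarith [hci.1]
      linarith
  nlinarith [Real.sqrt_nonneg (n:ℝ), dist_nonneg (x := y) (y := J.center), hJ.le]

lemma poisson_div {n : ℕ} (α : ℝ) (Q : QCube n)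
    (μ : Measure (EuclideanSpace ℝ (Fin n))) (hQ : 0 < Q.l) :
    poissonM α 1 Q μ / ENNReal.ofReal Q.l
      = ∫⁻ y, ENNReal.ofReal (1 / (Q.l + dist y Q.center) ^ ((n : ℝ) + 1 - α)) ∂μ := by
  have h1 : poissonM α 1 Q μ = ENNReal.ofReal Q.l *
      ∫⁻ y, ENNReal.ofReal (1 / (Q.l + dist y Q.center) ^ ((n : ℝ) + 1 - α)) ∂μ := by
    rw [poissonM, ← lintegral_const_mul' _ _ ENNReal.ofReal_ne_top]
    congr 1
    ext y
    rw [← ENNReal.ofReal_mul hQ.le]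
    congr 1
    rw [Real.rpow_one]
    ring
  rw [h1, mul_comm, mul_div_assoc,
    ENNReal.div_self (by simpa using hQ) ENNReal.ofReal_ne_top, mul_one]

lemma integ_comp {n : ℕ} {μ : Measure (EuclideanSpace ℝ (Fin n))} {J K : QCube n}
    {p M : ℝ} (hp : 0 < p) (hM : 0 < M) (hJ : 0 < J.l) (hK : 0 < K.l)
    (h : ∀ᵐ y ∂μ, J.l + dist y J.center ≤ M * (K.l + dist y K.center)) :
    ∫⁻ y, ENNReal.ofReal (1 / (K.l + dist y K.center) ^ p) ∂μ
      ≤ ENNReal.ofReal (M ^ p) *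
        ∫⁻ y, ENNReal.ofReal (1 / (J.l + dist y J.center) ^ p) ∂μ := by
  rw [← lintegral_const_mul' _ _ ENNReal.ofReal_ne_top]
  apply lintegral_mono_ae
  filter_upwards [h] with y hy
  rw [← ENNReal.ofReal_mul (Real.rpow_nonneg hM.le p)]
  apply ENNReal.ofReal_le_ofReal
  have hDJ : 0 < J.l + dist y J.center := by positivity
  have hDK : 0 < K.l + dist y K.center := by positivity
  have h1 : (J.l + dist y J.center) ^ p ≤ (M * (K.l + dist y K.center)) ^ p :=
    Real.rpow_le_rpow hDJ.le hy hp.le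
  rw [Real.mul_rpow hM.le hDK.le] at h1
  rw [mul_one_div, div_le_div_iff₀ (by positivity) (by positivity), one_mul]
  exact h1

/-- Comparability of Poisson averages for nested cubes away from the
support: (i) if `J ⊆ K`, `2K ⊆ I` and `μ(I) = 0` then
`c · P^α(J,μ)/ℓ(J) ≤ P^α(K,μ)/ℓ(K) ≤ C · P^α(J,μ)/ℓ(J)`; (ii) if `2J ⊆ K ⊆ I` and
`μ(I) = 0` then `P^α(K,μ)/ℓ(K) ≤ C · P^α(J,μ)/ℓ(J)`; with `0 < c ≤ C` depending only on
`n` and `α`. -/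
theorem statement9 (n : ℕ) (α : ℝ) (hn : 1 ≤ n) (hα0 : 0 ≤ α) (hαn : α < n) :
    ∃ c C : ℝ, 0 < c ∧ 0 < C ∧ c ≤ C ∧
      ∀ μ : Measure (EuclideanSpace ℝ (Fin n)), IsLocallyFiniteMeasure μ →
        (∀ J K I : QCube n, 0 < J.l → 0 < K.l → 0 < I.l →
          J.pts ⊆ K.pts → (K.dilate 2).pts ⊆ I.pts → μ I.pts = 0 →
          ENNReal.ofReal c * (poissonM α 1 J μ / ENNReal.ofReal J.l)
              ≤ poissonM α 1 K μ / ENNReal.ofReal K.l ∧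
            poissonM α 1 K μ / ENNReal.ofReal K.l
              ≤ ENNReal.ofReal C * (poissonM α 1 J μ / ENNReal.ofReal J.l)) ∧
        (∀ J K I : QCube n, 0 < J.l → 0 < K.l → 0 < I.l →
          (J.dilate 2).pts ⊆ K.pts → K.pts ⊆ I.pts → μ I.pts = 0 →
          poissonM α 1 K μ / ENNReal.ofReal K.l
            ≤ ENNReal.ofReal C * (poissonM α 1 J μ / ENNReal.ofReal J.l)) := by
  set p : ℝ := (n : ℝ) + 1 - α with hpdef
  have hp : 0 < p := by
    have : α < (n : ℝ) := hαn
    simp only [hpdef]; linarith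
  set A : ℝ := 3 + 2 * Real.sqrt n with hAdef
  set B : ℝ := 1 + Real.sqrt n with hBdef
  have hA : 1 ≤ A := by have := Real.sqrt_nonneg (n:ℝ); simp only [hAdef]; linarith
  have hB : 1 ≤ B := by have := Real.sqrt_nonneg (n:ℝ); simp only [hBdef]; linarith
  have hApos : 0 < A := by linarith
  have hBpos : 0 < B := by linarith
  have hAp : 0 < A ^ p := Real.rpow_pos_of_pos hApos p
  have hBp : 0 < B ^ p := Real.rpow_pos_of_pos hBpos p
  have hAp1 : 1 ≤ A ^ p := by
    calc (1:ℝ) = 1 ^ p := (Real.one_rpow p).symm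
      _ ≤ A ^ p := Real.rpow_le_rpow (by norm_num) hA hp.le
  have hBp1 : 1 ≤ B ^ p := by
    calc (1:ℝ) = 1 ^ p := (Real.one_rpow p).symm
      _ ≤ B ^ p := Real.rpow_le_rpow (by norm_num) hB hp.le
  refine ⟨(A ^ p)⁻¹, B ^ p, inv_pos.mpr hAp, hBp, ?_, ?_⟩
  · calc (A ^ p)⁻¹ ≤ 1 := inv_le_one_of_one_le₀ hAp1
      _ ≤ B ^ p := hBp1
  intro μ _
  constructor
  · intro J K I hJ hK hI hJK hKI hμI
    have hae : ∀ᵐ y ∂μ, y ∉ I.pts := measure_eq_zero_iff_ae_notMem.mp hμI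
    have hcJK : J.center ∈ K.pts := hJK (center_mem hJ)
    have hlJK : J.l ≤ K.l := l_le hn hJ hJK
    rw [poisson_div α J μ hJ, poisson_div α K μ hK]
    constructor
    · have hlow := integ_comp (J := K) (K := J) hp hApos hK hJ (by
        filter_upwards [hae] with y hy
        exact geoLower hJ hK hcJK (fun h => hy (hKI h)))
      calc ENNReal.ofReal (A ^ p)⁻¹ *
            ∫⁻ y, ENNReal.ofReal (1 / (J.l + dist y J.center) ^ ((n : ℝ) + 1 - α)) ∂μ
          ≤ ENNReal.ofReal (A ^ p)⁻¹ * (ENNReal.ofReal (A ^ p) *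
            ∫⁻ y, ENNReal.ofReal (1 / (K.l + dist y K.center) ^ ((n : ℝ) + 1 - α)) ∂μ) :=
            mul_le_mul_right hlow _
        _ = ∫⁻ y, ENNReal.ofReal (1 / (K.l + dist y K.center) ^ ((n : ℝ) + 1 - α)) ∂μ := by
            rw [← mul_assoc, ← ENNReal.ofReal_mul (by positivity),
              inv_mul_cancel₀ hAp.ne', ENNReal.ofReal_one, one_mul]
    · exact integ_comp hp hBpos hJ hK (Filter.Eventually.of_forall (geoUpper hK hlJK hcJK))
  · intro J K I hJ hK hI h2JK hKI hμI
    have hsub : J.pts ⊆ K.pts := fun x hx => h2JK (sub_dilate2 hJ hx)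
    have hcJK : J.center ∈ K.pts := hsub (center_mem hJ)
    have hlJK : J.l ≤ K.l := l_le hn hJ hsub
    rw [poisson_div α J μ hJ, poisson_div α K μ hK]
    exact integ_comp hp hBpos hJ hK (Filter.Eventually.of_forall (geoUpper hK hlJK hcJK))
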